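/- Let k be an algebraically closed field of characteristic p > 0 and let n ≥ 3. Let a, b, c ∈ k[x_0,…,x_n] be homogeneous polynomials of the same degree d+1 ≥ 1 having no common non-unit divisor, and suppose the 1-form ω = a dx_0 + b dx_1 + c dx_2 (i.e. the homogeneous polynomial 1-form with a_0 = a, a_1 = b, a_2 = c and a_i = 0 for i ≥ 3) is projective and integrable. Then a, b and c all belong to the k-subalgebra of k[x_0,…,x_n] generated by x_0, x_1, x_2 and the p-th powers x_i^p for 3 ≤ i ≤ n. -/

import Mathlib

open MvPolynomial

section AuxLemmas

variable {σ R : Type*} [CommSemiring R] [DecidableEq σ]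

private lemma coeff_pderiv' (i : σ) (f : MvPolynomial σ R) (m : σ →₀ ℕ) :
    coeff m (pderiv i f) = (m i + 1 : ℕ) * coeff (m + Finsupp.single i 1) f := by
  induction f using MvPolynomial.induction_on' with
  | add f g hf hg => simp [hf, hg, mul_add]
  | monomial s r =>
    rw [pderiv_monomial, coeff_monomial, coeff_monomial]
    by_cases h : s = m + Finsupp.single i 1
    · subst h
      rw [if_pos (add_tsub_cancel_right _ _), if_pos rfl]
      push_cast
      simp [mul_comm]
    · rw [if_neg h]
      by_cases h2 : s - Finsupp.single i 1 = m
      · have hsi : s i = 0 := by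
          by_contra hsi
          apply h
          rw [← h2, tsub_add_cancel_of_le]
          rwa [Finsupp.single_le_iff, Nat.one_le_iff_ne_zero]
        rw [if_pos h2, hsi]
        simp
      · rw [if_neg h2, mul_zero]

private lemma isHomogeneous_pderiv' {i : σ} {f : MvPolynomial σ R} {d : ℕ}
    (hf : f.IsHomogeneous (d + 1)) : (pderiv i f).IsHomogeneous d := by
  intro m hm
  rw [coeff_pderiv'] at hm
  have h2 : coeff (m + Finsupp.single i 1) f ≠ 0 := fun h => hm (by simp [h])
  have := hf h2
  rw [map_add] at this
  have hs : (Finsupp.weight 1) (Finsupp.single i 1) = 1 := by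
    simp [Finsupp.weight_apply, Finsupp.sum_single_index]
  omega

private lemma eq_zero_of_dvd_of_isHom {a g : MvPolynomial σ R} {d : ℕ}
    (ha : a.IsHomogeneous (d + 1)) (hg : g.IsHomogeneous d) (hdvd : a ∣ g) : g = 0 := by
  obtain ⟨h, rfl⟩ := hdvd
  by_contra hne
  obtain ⟨m, hm⟩ := MvPolynomial.ne_zero_iff.mp hne
  have hmem : m ∈ (a * h).support := by rwa [MvPolynomial.mem_support_iff]
  have := MvPolynomial.support_mul a h hmem
  rw [Finset.mem_add] at this
  obtain ⟨m1, hm1, m2, hm2, rfl⟩ := this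
  have h1 : (Finsupp.weight 1) m1 = d + 1 := ha (MvPolynomial.mem_support_iff.mp hm1)
  have h2 : (Finsupp.weight 1) (m1 + m2) = d := hg hm
  rw [map_add, h1] at h2
  omega

end AuxLemmas

private lemma key_zero {σ k : Type*} [Field k] [DecidableEq σ] [Finite σ] {d : ℕ}
    (a b c g : MvPolynomial σ k)
    (ha : a.IsHomogeneous (d + 1)) (hg : g.IsHomogeneous d)
    (hcop : ∀ q, q ∣ a → q ∣ b → q ∣ c → IsUnit q)
    (h1 : a ∣ g * b) (h2 : a ∣ g * c) : g = 0 := by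
  letI : NormalizationMonoid (MvPolynomial σ k) :=
    UniqueFactorizationMonoid.normalizationMonoid.toNormalizationMonoid
  letI : NormalizedGCDMonoid (MvPolynomial σ k) :=
    UniqueFactorizationMonoid.toNormalizedGCDMonoid _
  have h0 : a ∣ g * a := dvd_mul_left a g
  have d2 : a ∣ g * gcd b c := (dvd_gcd h1 h2).trans (gcd_mul_left' g b c).dvd
  have d4 : a ∣ g * gcd a (gcd b c) :=
    (dvd_gcd h0 d2).trans (gcd_mul_left' g a (gcd b c)).dvd
  have hu : IsUnit (gcd a (gcd b c)) :=
    hcop _ (gcd_dvd_left _ _) ((gcd_dvd_right a _).trans (gcd_dvd_left b c))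
      ((gcd_dvd_right a _).trans (gcd_dvd_right b c))
  exact eq_zero_of_dvd_of_isHom ha hg ((hu.dvd_mul_right).mp d4)

/-- The `k`-subalgebra of `k[x_0, …, x_n]` generated by `x_0, x_1, x_2` and the `p`-th
powers `x_i^p` for `3 ≤ i ≤ n`. -/
noncomputable def xAlg (k : Type*) [CommRing k] (n p : ℕ) :
    Subalgebra k (MvPolynomial (Fin (n + 1)) k) :=
  Algebra.adjoin k
    {P | (∃ i : Fin (n + 1), (i : ℕ) < 3 ∧ P = X i) ∨
         (∃ i : Fin (n + 1), 3 ≤ (i : ℕ) ∧ P = X i ^ p)}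

private lemma mem_xAlg_of_pderiv {k : Type*} [CommRing k] [NoZeroDivisors k] {n p : ℕ}
    [CharP k p] {P : MvPolynomial (Fin (n + 1)) k}
    (hP : ∀ i : Fin (n + 1), 3 ≤ (i : ℕ) → pderiv i P = 0) : P ∈ xAlg k n p := by
  set S := xAlg k n p with hS
  have key : ∀ m ∈ P.support, ∀ i : Fin (n + 1), 3 ≤ (i : ℕ) → p ∣ m i := by
    intro m hm i hi
    rcases Nat.eq_zero_or_pos (m i) with h0 | h0
    · simp [h0]
    · have hz := hP i hi
      have hcf := coeff_pderiv' i P (m - Finsupp.single i 1)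
      rw [hz, coeff_zero] at hcf
      have hle : Finsupp.single i 1 ≤ m := by
        rw [Finsupp.single_le_iff]; omega
      rw [tsub_add_cancel_of_le hle] at hcf
      have hmi : (m - Finsupp.single i 1 : Fin (n+1) →₀ ℕ) i + 1 = m i := by
        rw [Finsupp.tsub_apply, Finsupp.single_apply, if_pos rfl]; omega
      rw [hmi] at hcf
      have hc : coeff m P ≠ 0 := mem_support_iff.mp hm
      have : ((m i : ℕ) : k) = 0 := by
        rcases mul_eq_zero.mp hcf.symm with h | h
        · exact h
        · exact absurd h hc
      exact (CharP.cast_eq_zero_iff k p _).mp this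
  rw [← P.support_sum_monomial_coeff]
  apply Subalgebra.sum_mem
  intro m hm
  rw [monomial_eq]
  apply Subalgebra.mul_mem
  · rw [← MvPolynomial.algebraMap_eq]; exact Subalgebra.algebraMap_mem _ _
  · rw [Finsupp.prod]
    apply Subalgebra.prod_mem
    intro i _
    rcases lt_or_ge (i : ℕ) 3 with h3 | h3
    · have hX : (X i : MvPolynomial (Fin (n+1)) k) ∈ S :=
        Algebra.subset_adjoin (Or.inl ⟨i, h3, rfl⟩)
      exact Subalgebra.pow_mem _ hX _
    · obtain ⟨t, ht⟩ := key m hm i h3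
      have hX : (X i ^ p : MvPolynomial (Fin (n+1)) k) ∈ S :=
        Algebra.subset_adjoin (Or.inr ⟨i, h3, rfl⟩)
      rw [ht, pow_mul]
      exact Subalgebra.pow_mem _ hX _

/-- Over an algebraically closed field of characteristic `p > 0` and for
`n ≥ 3`, if `a, b, c` are homogeneous polynomials of the same degree `d + 1 ≥ 1` with no
common non-unit divisor and the `1`-form `ω = a dx_0 + b dx_1 + c dx_2` is projective and
integrable, then `a`, `b`, `c` all lie in the subalgebra generated by `x_0, x_1, x_2` and
the `p`-th powers `x_i^p`, `3 ≤ i ≤ n`. -/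
theorem stmt_10 {k : Type*} [Field k] [IsAlgClosed k] (p : ℕ) [CharP k p] (hp : 0 < p)
    (n d : ℕ) (hn : 3 ≤ n)
    (a b c : MvPolynomial (Fin (n + 1)) k)
    (hha : a.IsHomogeneous (d + 1)) (hhb : b.IsHomogeneous (d + 1))
    (hhc : c.IsHomogeneous (d + 1))
    (hcop : ∀ g : MvPolynomial (Fin (n + 1)) k, g ∣ a → g ∣ b → g ∣ c → IsUnit g)
    (A : Fin (n + 1) → MvPolynomial (Fin (n + 1)) k)
    (hA : ∀ i : Fin (n + 1), A i =
      if (i : ℕ) = 0 then a else if (i : ℕ) = 1 then b else if (i : ℕ) = 2 then c else 0)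
    (hproj : ∑ i : Fin (n + 1), X i * A i = 0)
    (hint : ∀ i j l : Fin (n + 1),
      A i * (pderiv j (A l) - pderiv l (A j)) -
        A j * (pderiv i (A l) - pderiv l (A i)) +
        A l * (pderiv i (A j) - pderiv j (A i)) = 0) :
    a ∈ xAlg k n p ∧ b ∈ xAlg k n p ∧ c ∈ xAlg k n p := by
  have i0 : Fin (n + 1) := ⟨0, by omega⟩
  -- named indices
  set j0 : Fin (n + 1) := ⟨0, by omega⟩ with hj0
  set j1 : Fin (n + 1) := ⟨1, by omega⟩ with hj1
  set j2 : Fin (n + 1) := ⟨2, by omega⟩ with hj2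
  have hA0 : A j0 = a := by rw [hA]; rfl
  have hA1 : A j1 = b := by rw [hA]; rfl
  have hA2 : A j2 = c := by rw [hA]; rfl
  have hAl : ∀ l : Fin (n + 1), 3 ≤ (l : ℕ) → A l = 0 := by
    intro l hl
    rw [hA]
    have h0 : (l : ℕ) ≠ 0 := by omega
    have h1 : (l : ℕ) ≠ 1 := by omega
    have h2 : (l : ℕ) ≠ 2 := by omega
    rw [if_neg h0, if_neg h1, if_neg h2]
  -- the three commutation relations, for each l with l ≥ 3
  have rel_ab : ∀ l : Fin (n + 1), 3 ≤ (l : ℕ) →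
      b * pderiv l a = a * pderiv l b := by
    intro l hl
    have h := hint j0 j1 l
    rw [hA0, hA1, hAl l hl] at h
    simp only [map_zero, zero_sub, zero_mul, add_zero, mul_neg] at h
    linear_combination h
  have rel_ac : ∀ l : Fin (n + 1), 3 ≤ (l : ℕ) →
      c * pderiv l a = a * pderiv l c := by
    intro l hl
    have h := hint j0 j2 l
    rw [hA0, hA2, hAl l hl] at h
    simp only [map_zero, zero_sub, zero_mul, add_zero, mul_neg] at h
    linear_combination h
  have rel_bc : ∀ l : Fin (n + 1), 3 ≤ (l : ℕ) →
      c * pderiv l b = b * pderiv l c := by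
    intro l hl
    have h := hint j1 j2 l
    rw [hA1, hA2, hAl l hl] at h
    simp only [map_zero, zero_sub, zero_mul, add_zero, mul_neg] at h
    linear_combination h
  -- vanishing of all partial derivatives in directions l ≥ 3
  have hda : ∀ l : Fin (n + 1), 3 ≤ (l : ℕ) → pderiv l a = 0 := by
    intro l hl
    exact key_zero a b c (pderiv l a) hha (isHomogeneous_pderiv' hha) hcop
      ⟨pderiv l b, by linear_combination rel_ab l hl⟩
      ⟨pderiv l c, by linear_combination rel_ac l hl⟩
  have hdb : ∀ l : Fin (n + 1), 3 ≤ (l : ℕ) → pderiv l b = 0 := by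
    intro l hl
    exact key_zero b a c (pderiv l b) hhb (isHomogeneous_pderiv' hhb)
      (fun q hqb hqa hqc => hcop q hqa hqb hqc)
      ⟨pderiv l a, by linear_combination -rel_ab l hl⟩
      ⟨pderiv l c, by linear_combination rel_bc l hl⟩
  have hdc : ∀ l : Fin (n + 1), 3 ≤ (l : ℕ) → pderiv l c = 0 := by
    intro l hl
    exact key_zero c a b (pderiv l c) hhc (isHomogeneous_pderiv' hhc)
      (fun q hqc hqa hqb => hcop q hqa hqb hqc)
      ⟨pderiv l a, by linear_combination -rel_ac l hl⟩
      ⟨pderiv l b, by linear_combination -rel_bc l hl⟩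
  exact ⟨mem_xAlg_of_pderiv hda, mem_xAlg_of_pderiv hdb, mem_xAlg_of_pderiv hdc⟩
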